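/- arXiv:2510.24600 — 2 statements merged into one kernel-verified Lean document; each statement's English description precedes it below -/
import Mathlib

section
/- Lower bound (2.11) for the delayed renewal function: For every t > 0, H^{(d)}(t) ≥ t/a₁ − (1 − F^{(d)}(t)) · t/a₁ − a₁^{(d)}/a₁. -/
open MeasureTheory ProbabilityTheory Real Filter
open scoped ENNReal

private lemma meas_pos_of_ae_mem {Ω : Type*} [MeasureSpace Ω]
    [IsProbabilityMeasure (ℙ : Measure Ω)] {s : Set Ω}
    (h : ∀ᵐ ω ∂(ℙ : Measure Ω), ω ∈ s) : 0 < (ℙ : Measure Ω) s := by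
  refine pos_iff_ne_zero.mpr fun h0 => ?_
  have h2 : ∀ᵐ ω ∂(ℙ : Measure Ω), ω ∉ s := measure_eq_zero_iff_ae_notMem.mp h0
  obtain ⟨ω, h1, h2⟩ := (h.and h2).exists
  exact h2 h1

/-- **Lower bound (2.11) for the delayed renewal function.**  Let `ζ 0 = ζ₁⁽ᵈ⁾` (delayed
term, distribution function `F⁽ᵈ⁾`, mean `a₁⁽ᵈ⁾`) and `ζ k`, `k ≥ 1`, i.i.d. positive
with mean `a₁`, all independent.  With `N⁽ᵈ⁾(t) = #{n ≥ 1 : ∑_{k<n} ζ k ≤ t}` and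
`H⁽ᵈ⁾(t) = E N⁽ᵈ⁾(t)`, for every `t > 0`,
`H⁽ᵈ⁾(t) ≥ t/a₁ - (1 - F⁽ᵈ⁾(t)) t/a₁ - a₁⁽ᵈ⁾/a₁`. -/
theorem delayed_renewal_function_lower_bound
    {Ω : Type*} [MeasureSpace Ω] [IsProbabilityMeasure (ℙ : Measure Ω)]
    (ζ : ℕ → Ω → ℝ)
    (hmeas : ∀ k, Measurable (ζ k))
    (hindep : iIndepFun ζ ℙ)
    (hident : ∀ k, 1 ≤ k → IdentDistrib (ζ k) (ζ 1) ℙ ℙ)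
    (hpos : ∀ k, ∀ᵐ ω ∂ℙ, 0 < ζ k ω)
    (a1 : ℝ) (ha1 : a1 = ∫ ω, ζ 1 ω ∂ℙ) (hζ1int : Integrable (ζ 1) ℙ)
    (a1d : ℝ) (ha1d : a1d = ∫ ω, ζ 0 ω ∂ℙ) (hζdint : Integrable (ζ 0) ℙ)
    (Nd : ℝ → Ω → ℕ)
    (hNd : ∀ t ω, Nd t ω =
      Set.ncard {n : ℕ | 1 ≤ n ∧ (∑ k ∈ Finset.range n, ζ k ω) ≤ t})
    (Hd : ℝ → ℝ) (hHd : ∀ t, Hd t = ∫ ω, (Nd t ω : ℝ) ∂ℙ)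
    (Fd : ℝ → ℝ) (hFd : ∀ y, Fd y = (ℙ {ω | ζ 0 ω ≤ y}).toReal)
    (t : ℝ) (ht : 0 < t) :
    Hd t ≥ t / a1 - (1 - Fd t) * (t / a1) - a1d / a1 := by
  classical
  -- abbreviations
  set S : ℕ → Ω → ℝ := fun n ω => ∑ k ∈ Finset.range n, ζ k ω with hSdef
  have hSmeas : ∀ n, Measurable (S n) := fun n =>
    Finset.measurable_sum _ fun k _ => hmeas k
  have hζnn : ∀ k, ∀ᵐ ω ∂ℙ, 0 ≤ ζ k ω := fun k => (hpos k).mono fun ω h => h.le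
  have hSnn : ∀ n, ∀ᵐ ω ∂ℙ, 0 ≤ S n ω := by
    intro n
    have h : ∀ᵐ ω ∂ℙ, ∀ k ∈ Finset.range n, 0 ≤ ζ k ω :=
      (ae_ball_iff (Finset.range n).countable_toSet).2 fun k _ => hζnn k
    filter_upwards [h] with ω hω
    exact Finset.sum_nonneg hω
  set A : ℕ → Set Ω := fun n => {ω | S n ω ≤ t} with hAdef
  have hAmeas : ∀ n, MeasurableSet (A n) := fun n =>
    measurableSet_le (hSmeas n) measurable_const
  set q : ℕ → ℝ := fun n => ((ℙ : Measure Ω) (A (n + 1))).toReal with hqdef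
  -- integrability and means of the ζ's
  have hζint : ∀ n, 1 ≤ n → Integrable (ζ n) ℙ := fun n hn =>
    ((hident n hn).integrable_iff).mpr hζ1int
  have hζmean : ∀ n, 1 ≤ n → ∫ ω, ζ n ω ∂ℙ = a1 := fun n hn => by
    rw [ha1]; exact (hident n hn).integral_eq
  -- positivity of a1
  have ha1pos : 0 < a1 := by
    rw [ha1, integral_pos_iff_support_of_nonneg_ae (hζnn 1) hζ1int]
    exact meas_pos_of_ae_mem ((hpos 1).mono fun ω h => ne_of_gt h)
  -- exponential moments
  have hexpint : ∀ (f : Ω → ℝ), Measurable f → (∀ᵐ ω ∂ℙ, 0 ≤ f ω) →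
      Integrable (fun ω => exp (-1 * f ω)) ℙ := by
    intro f hf hnn
    refine Integrable.mono' (integrable_const 1)
      ((hf.const_mul _).exp.aestronglyMeasurable) ?_
    filter_upwards [hnn] with ω hω
    rw [Real.norm_eq_abs, abs_of_nonneg (exp_pos _).le]
    exact Real.exp_le_one_iff.mpr (by linarith)
  set r : ℝ := mgf (ζ 1) ℙ (-1) with hrdef
  have hr0 : 0 ≤ r := mgf_nonneg
  have hrlt : r < 1 := by
    have hint : Integrable (fun ω => 1 - exp (-1 * ζ 1 ω)) ℙ :=
      (integrable_const 1).sub (hexpint (ζ 1) (hmeas 1) (hζnn 1))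
    have hpos' : 0 < ∫ ω, (1 - exp (-1 * ζ 1 ω)) ∂ℙ := by
      rw [integral_pos_iff_support_of_nonneg_ae ?_ hint]
      · refine meas_pos_of_ae_mem ?_
        filter_upwards [hpos 1] with ω hω
        have h1 : exp (-1 * ζ 1 ω) < 1 := by
          rw [Real.exp_lt_one_iff]; linarith
        simp only [Function.mem_support]
        intro h; nlinarith
      · filter_upwards [hpos 1] with ω hω
        have h1 : exp (-1 * ζ 1 ω) ≤ 1 := Real.exp_le_one_iff.mpr (by linarith)
        simp only [Pi.zero_apply]; linarith
    have heq : ∫ ω, (1 - exp (-1 * ζ 1 ω)) ∂ℙ = 1 - r := by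
      rw [integral_sub (integrable_const 1) (hexpint (ζ 1) (hmeas 1) (hζnn 1))]
      simp [hrdef, mgf]
    linarith [heq ▸ hpos']
  -- mgf of S n as a product
  have hmgfζ : ∀ k, 1 ≤ k → mgf (ζ k) ℙ (-1) = r := by
    intro k hk
    have h := ((hident k hk).comp ((measurable_const_mul (-1 : ℝ)).exp)).integral_eq
    rw [hrdef]
    simpa [mgf, Function.comp] using h
  have hmgf0 : mgf (ζ 0) ℙ (-1) ≤ 1 := by
    have h := integral_mono_ae (hexpint (ζ 0) (hmeas 0) (hζnn 0)) (integrable_const 1)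
      (by filter_upwards [hζnn 0] with ω h; exact Real.exp_le_one_iff.mpr (by linarith))
    simpa [mgf] using h
  have hmgfS : ∀ n, mgf (S n) ℙ (-1) = ∏ k ∈ Finset.range n, mgf (ζ k) ℙ (-1) := by
    intro n
    have hfun : S n = ∑ k ∈ Finset.range n, ζ k := by
      funext ω; simp [hSdef, Finset.sum_apply]
    rw [hfun]
    exact hindep.mgf_sum hmeas (Finset.range n)
  have hvb : ∀ n, mgf (S (n + 1)) ℙ (-1) ≤ r ^ n := by
    intro n
    rw [hmgfS, Finset.prod_range_succ']
    have h1 : ∏ k ∈ Finset.range n, mgf (ζ (k + 1)) ℙ (-1) = r ^ n := by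
      rw [Finset.prod_congr rfl fun k _ => hmgfζ (k + 1) (Nat.succ_le_succ (Nat.zero_le _))]
      simp
    rw [h1]
    calc r ^ n * mgf (ζ 0) ℙ (-1) ≤ r ^ n * 1 :=
          mul_le_mul_of_nonneg_left hmgf0 (pow_nonneg hr0 n)
      _ = r ^ n := mul_one _
  -- Chernoff bound for the partial sums
  have hmarkov : ∀ n, ((ℙ : Measure Ω) (A n)).toReal ≤ exp t * mgf (S n) ℙ (-1) := by
    intro n
    have hint : Integrable (fun ω => exp (-1 * S n ω)) ℙ :=
      hexpint (S n) (hSmeas n) (hSnn n)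
    have h := measure_le_le_exp_mul_mgf (X := S n) (μ := ℙ) (t := -1) t (by norm_num) hint
    simpa [hAdef, measureReal_def] using h
  have hqb : ∀ n, q n ≤ exp t * r ^ n := fun n =>
    (hmarkov (n + 1)).trans (mul_le_mul_of_nonneg_left (hvb n) (exp_pos t).le)
  have hqnn : ∀ n, 0 ≤ q n := fun n => ENNReal.toReal_nonneg
  have hqsum : Summable q :=
    Summable.of_nonneg_of_le hqnn hqb ((summable_geometric_of_lt_one hr0 hrlt).mul_left _)
  have hne_top : (∑' n, (ℙ : Measure Ω) (A (n + 1))) ≠ ⊤ := by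
    have h1 : ∀ n, (ℙ : Measure Ω) (A (n + 1)) = ENNReal.ofReal (q n) := fun n =>
      (ENNReal.ofReal_toReal (measure_ne_top _ _)).symm
    rw [tsum_congr h1, ← ENNReal.ofReal_tsum_of_nonneg hqnn hqsum]
    exact ENNReal.ofReal_ne_top
  -- Borel–Cantelli: a.e. finiteness
  have hfin : ∀ᵐ ω ∂ℙ, {i : ℕ | ω ∈ A (i + 1)}.Finite :=
    ae_finite_setOf_mem hne_top
  -- identify Nd with a sum of indicators
  set G : Ω → ℝ≥0∞ := fun ω => ∑' n, (A (n + 1)).indicator (fun _ => (1 : ℝ≥0∞)) ω with hGdef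
  have hGmeas : Measurable G :=
    Measurable.ennreal_tsum fun n => measurable_const.indicator (hAmeas (n + 1))
  have hGint : ∫⁻ ω, G ω ∂ℙ = ∑' n, (ℙ : Measure Ω) (A (n + 1)) := by
    rw [hGdef]
    rw [lintegral_tsum fun n => (measurable_const.indicator (hAmeas (n + 1))).aemeasurable]
    refine tsum_congr fun n => ?_
    rw [lintegral_indicator (hAmeas (n + 1))]
    simp
  have hGlt : ∀ᵐ ω ∂ℙ, G ω < ⊤ :=
    ae_lt_top hGmeas (by rw [hGint]; exact hne_top)
  have hNdG : ∀ᵐ ω ∂ℙ, (Nd t ω : ℝ≥0∞) = G ω := by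
    filter_upwards [hfin] with ω hω
    have himg : {n : ℕ | 1 ≤ n ∧ S n ω ≤ t} = (fun k => k + 1) '' {i : ℕ | ω ∈ A (i + 1)} := by
      ext n
      constructor
      · rintro ⟨hn, h⟩
        exact ⟨n - 1, by simpa [hAdef, Nat.sub_add_cancel hn] using h, Nat.sub_add_cancel hn⟩
      · rintro ⟨i, hi, rfl⟩
        exact ⟨Nat.succ_le_succ (Nat.zero_le _), hi⟩
    have hcount : Nd t ω = Set.ncard {i : ℕ | ω ∈ A (i + 1)} := by
      have himg' : {n : ℕ | 1 ≤ n ∧ (∑ k ∈ Finset.range n, ζ k ω) ≤ t}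
          = (fun k => k + 1) '' {i : ℕ | ω ∈ A (i + 1)} := himg
      rw [hNd, himg']
      exact Set.ncard_image_of_injective _ fun a b h => by omega
    have hG : G ω = (Set.ncard {i : ℕ | ω ∈ A (i + 1)} : ℝ≥0∞) := by
      simp only [hGdef]
      have h1 : ∑' n, (A (n + 1)).indicator (fun _ => (1 : ℝ≥0∞)) ω
          = ∑ i ∈ hω.toFinset, (A (i + 1)).indicator (fun _ => (1 : ℝ≥0∞)) ω := by
        refine tsum_eq_sum fun i hi => ?_
        have : ω ∉ A (i + 1) := by simpa [Set.Finite.mem_toFinset] using hi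
        simp [Set.indicator_apply, this]
      rw [h1]
      have h2 : ∀ i ∈ hω.toFinset, (A (i + 1)).indicator (fun _ => (1 : ℝ≥0∞)) ω = 1 := by
        intro i hi
        have : ω ∈ A (i + 1) := by simpa [Set.Finite.mem_toFinset] using hi
        simp [Set.indicator_apply, this]
      rw [Finset.sum_congr rfl h2, Finset.sum_const,
        Set.ncard_eq_toFinset_card _ hω]
      simp
    rw [hcount, hG]
  -- Hd t as a series
  have hHdsum : Hd t = ∑' n, q n := by
    rw [hHd]
    have h1 : ∫ ω, (Nd t ω : ℝ) ∂ℙ = ∫ ω, (G ω).toReal ∂ℙ := by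
      refine integral_congr_ae ?_
      filter_upwards [hNdG] with ω h
      rw [← h]; simp
    rw [h1, integral_toReal hGmeas.aemeasurable hGlt, hGint,
      ENNReal.tsum_toReal_eq fun n => measure_ne_top _ _]
  have hpartial : ∀ m, ∑ n ∈ Finset.range m, q n ≤ Hd t := fun m => by
    rw [hHdsum]
    exact Summable.sum_le_tsum _ (fun i _ => hqnn i) hqsum
  -- the quantities d n = E (t - S n)⁺
  set d : ℕ → ℝ := fun n => ∫ ω, max (t - S n ω) 0 ∂ℙ with hddef
  have hdint : ∀ n, Integrable (fun ω => max (t - S n ω) 0) ℙ := by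
    intro n
    refine Integrable.mono' (integrable_const t)
      (((measurable_const.sub (hSmeas n)).max measurable_const).aestronglyMeasurable) ?_
    filter_upwards [hSnn n] with ω h
    rw [Real.norm_eq_abs, abs_of_nonneg (le_max_right _ _)]
    exact max_le (by linarith) ht.le
  -- indicator functions
  set χ : ℕ → Ω → ℝ := fun n => (A n).indicator (fun _ => (1 : ℝ)) with hχdef
  have hχmeas : ∀ n, Measurable (χ n) := fun n =>
    measurable_const.indicator (hAmeas n)
  have hχint : ∀ n, Integrable (χ n) ℙ := fun n =>
    (integrable_const 1).indicator (hAmeas n)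
  have hχval : ∀ n, ∫ ω, χ n ω ∂ℙ = ((ℙ : Measure Ω) (A n)).toReal := by
    intro n
    rw [hχdef]
    have h := integral_indicator_const (μ := ℙ) (1 : ℝ) (hAmeas n)
    simpa [measureReal_def] using h
  -- independence of S n and ζ n
  have hIndepS : ∀ n, IndepFun (S n) (ζ n) ℙ := by
    intro n
    have h := hindep.indepFun_finsetSum_of_notMem hmeas
      (by simp : n ∉ Finset.range n)
    have hfun : S n = ∑ j ∈ Finset.range n, ζ j := by
      funext ω; simp [hSdef, Finset.sum_apply]
    rwa [← hfun] at h
  have hmulint : ∀ n, 1 ≤ n → Integrable (fun ω => ζ n ω * χ n ω) ℙ := by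
    intro n hn
    refine (hζint n hn).mono ((hmeas n).mul (hχmeas n)).aestronglyMeasurable ?_
    filter_upwards with ω
    rw [Real.norm_eq_abs, Real.norm_eq_abs, abs_mul]
    have : |χ n ω| ≤ 1 := by
      rw [hχdef]; simp [Set.indicator_apply]; split <;> simp
    nlinarith [abs_nonneg (ζ n ω), abs_nonneg (χ n ω)]
  have hprodval : ∀ n, 1 ≤ n →
      ∫ ω, ζ n ω * χ n ω ∂ℙ = a1 * ((ℙ : Measure Ω) (A n)).toReal := by
    intro n hn
    have hφ : Measurable (fun x : ℝ => if x ≤ t then (1 : ℝ) else 0) :=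
      Measurable.ite (measurableSet_le measurable_id measurable_const)
        measurable_const measurable_const
    have hχcomp : χ n = (fun x : ℝ => if x ≤ t then (1 : ℝ) else 0) ∘ S n := by
      funext ω
      simp [hχdef, Set.indicator_apply, hAdef, Function.comp]
    have hind2 : IndepFun (ζ n) (χ n) ℙ := by
      rw [hχcomp]
      exact ((hIndepS n).symm.comp measurable_id hφ)
    have hmul := hind2.integral_fun_mul_eq_mul_integral (hζint n hn).aestronglyMeasurable (hχint n).aestronglyMeasurable
    exact hmul.trans (by rw [hζmean n hn, hχval n])
  -- the step inequality
  have hstep : ∀ n, 1 ≤ n →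
      d n ≤ d (n + 1) + a1 * ((ℙ : Measure Ω) (A n)).toReal := by
    intro n hn
    have hpt : ∀ ω, max (t - S n ω) 0 ≤ max (t - S (n + 1) ω) 0 + ζ n ω * χ n ω := by
      intro ω
      have hS1 : S (n + 1) ω = S n ω + ζ n ω := by
        simp [hSdef, Finset.sum_range_succ]
      by_cases h : S n ω ≤ t
      · have hχ1 : χ n ω = 1 := by
          simp [hχdef, Set.indicator_apply, hAdef, h]
        rw [hχ1, mul_one, hS1]
        have h2 : max (t - S n ω) 0 = t - S n ω := max_eq_left (by linarith)
        have h3 : t - (S n ω + ζ n ω) ≤ max (t - (S n ω + ζ n ω)) 0 := le_max_left _ _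
        linarith
      · have hχ0 : χ n ω = 0 := by
          simp only [hχdef, Set.indicator_apply]
          rw [if_neg (by simpa [hAdef] using h)]
        rw [hχ0, mul_zero, add_zero]
        have h2 : max (t - S n ω) 0 = 0 := max_eq_right (by linarith [not_le.mp h])
        rw [h2]
        exact le_max_right _ _
    have hint2 : Integrable (fun ω => max (t - S (n + 1) ω) 0 + ζ n ω * χ n ω) ℙ :=
      (hdint (n + 1)).add (hmulint n hn)
    have h := integral_mono (hdint n) hint2 hpt
    rw [integral_add (hdint (n + 1)) (hmulint n hn), hprodval n hn] at h
    exact h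
  -- telescoping
  have htel : ∀ m, d 1 ≤ d (m + 1) + a1 * ∑ k ∈ Finset.range m, q k := by
    intro m
    induction m with
    | zero => simp
    | succ m ih =>
      have hs := hstep (m + 1) (Nat.succ_le_succ (Nat.zero_le _))
      have hq : ((ℙ : Measure Ω) (A (m + 1))).toReal = q m := rfl
      rw [hq] at hs
      calc d 1 ≤ d (m + 1) + a1 * ∑ k ∈ Finset.range m, q k := ih
        _ ≤ (d (m + 2) + a1 * q m) + a1 * ∑ k ∈ Finset.range m, q k := by linarith
        _ = d (m + 2) + a1 * ∑ k ∈ Finset.range (m + 1), q k := by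
            rw [Finset.sum_range_succ]; ring
  -- bound d (n+1) ≤ t * q n
  have hdb : ∀ n, d (n + 1) ≤ t * q n := by
    intro n
    have hpt : ∀ᵐ ω ∂ℙ, max (t - S (n + 1) ω) 0 ≤ t * χ (n + 1) ω := by
      filter_upwards [hSnn (n + 1)] with ω h
      by_cases hc : S (n + 1) ω ≤ t
      · have hχ1 : χ (n + 1) ω = 1 := by
          simp [hχdef, Set.indicator_apply, hAdef, hc]
        rw [hχ1, mul_one]
        exact max_le (by linarith) ht.le
      · have hχ0 : χ (n + 1) ω = 0 := by
          simp only [hχdef, Set.indicator_apply]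
          rw [if_neg (by simpa [hAdef] using hc)]
        rw [hχ0, mul_zero]
        have h2 : max (t - S (n + 1) ω) 0 = 0 := max_eq_right (by linarith [not_le.mp hc])
        rw [h2]
    have h := integral_mono_ae (hdint (n + 1)) ((hχint (n + 1)).const_mul t) hpt
    rwa [integral_const_mul, hχval (n + 1)] at h
  -- limit: d 1 ≤ a1 * Hd t
  have hd1 : d 1 ≤ a1 * Hd t := by
    have hle : ∀ m, d 1 ≤ t * q m + a1 * Hd t := by
      intro m
      have h1 := htel m
      have h2 := hdb m
      have h3 : a1 * ∑ k ∈ Finset.range m, q k ≤ a1 * Hd t :=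
        mul_le_mul_of_nonneg_left (hpartial m) ha1pos.le
      linarith
    have hlim : Tendsto (fun m => t * q m + a1 * Hd t) atTop (nhds (t * 0 + a1 * Hd t)) :=
      ((hqsum.tendsto_atTop_zero.const_mul t)).add tendsto_const_nhds
    have := ge_of_tendsto' hlim hle
    simpa using this
  -- lower bound for d 1
  have hd1lb : t * Fd t - a1d ≤ d 1 := by
    have hS1 : ∀ ω, S 1 ω = ζ 0 ω := fun ω => by simp [hSdef]
    have hpt : ∀ᵐ ω ∂ℙ, t * χ 1 ω - ζ 0 ω ≤ max (t - S 1 ω) 0 := by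
      filter_upwards [hζnn 0] with ω h
      rw [hS1 ω]
      by_cases hc : ζ 0 ω ≤ t
      · have hχ1 : χ 1 ω = 1 := by
          simp [hχdef, Set.indicator_apply, hAdef, hS1 ω, hc]
        rw [hχ1, mul_one]
        exact le_max_left _ _
      · have hχ0 : χ 1 ω = 0 := by
          simp only [hχdef, Set.indicator_apply]
          rw [if_neg (by simp [hAdef, hS1 ω]; linarith [not_le.mp hc])]
        rw [hχ0, mul_zero]
        have : (0 : ℝ) ≤ max (t - ζ 0 ω) 0 := le_max_right _ _
        linarith
    have hint1 : Integrable (fun ω => t * χ 1 ω - ζ 0 ω) ℙ :=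
      ((hχint 1).const_mul t).sub hζdint
    have h := integral_mono_ae hint1 (hdint 1) hpt
    rw [integral_sub ((hχint 1).const_mul t) hζdint, integral_const_mul, hχval 1] at h
    have hA1 : (A 1 : Set Ω) = {ω | ζ 0 ω ≤ t} := by
      ext ω; simp [hAdef, hS1 ω]
    rw [hA1] at h
    rw [hFd, ha1d]
    exact h
  -- conclusion
  have hmain : t * Fd t - a1d ≤ a1 * Hd t := le_trans hd1lb hd1
  have hgoal : t / a1 - (1 - Fd t) * (t / a1) - a1d / a1 = (t * Fd t - a1d) / a1 := by
    ring
  rw [ge_iff_le, hgoal, div_le_iff₀ ha1pos]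
  linarith
end

section
/- Bound (2.12) on the first moment of V^{(d)}: For every x > 0 and q ∈ (0,1), with V^{(d)} = x − q* N^{(d)}(a₁ x/q*), one has E V^{(d)} ≤ q* a₁^{(d)}/a₁ + (1 − F^{(d)}(a₁ x/q*)) · x. -/
open MeasureTheory ProbabilityTheory Real
open scoped ENNReal

lemma aux_icc_of_downward (M : Set ℕ) (hfin : M.Finite) (hsub : ∀ n ∈ M, 1 ≤ n)
    (hdc : ∀ k n, 1 ≤ k → k ≤ n → n ∈ M → k ∈ M) :
    ∀ n, n ∈ M ↔ 1 ≤ n ∧ n ≤ M.ncard := by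
  rcases M.eq_empty_or_nonempty with h | h
  · subst h; intro n; simp; omega
  · have hfs : hfin.toFinset.Nonempty := by simpa using h
    set m := hfin.toFinset.max' hfs with hm
    have hmem : m ∈ M := by simpa using hfin.toFinset.max'_mem hfs
    have hle : ∀ n ∈ M, n ≤ m := fun n hn => Finset.le_max' _ n (hfin.mem_toFinset.2 hn)
    have hM : M = Set.Icc 1 m :=
      Set.ext fun n => ⟨fun hn => ⟨hsub n hn, hle n hn⟩, fun hn => hdc n m hn.1 hn.2 hmem⟩
    have hcard : M.ncard = m := by
      rw [hM, ← Finset.coe_Icc, Set.ncard_coe_finset, Nat.card_Icc]; omega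
    intro n
    rw [hcard, hM, Set.mem_Icc]

/-- **Bound (2.12) on the first moment of `V⁽ᵈ⁾`.**  Let `ζ 0 = ζ₁⁽ᵈ⁾` (delayed term,
distribution function `F⁽ᵈ⁾`, mean `a₁⁽ᵈ⁾`) and `ζ k`, `k ≥ 1`, i.i.d. positive with
mean `a₁`, all independent; `q ∈ (0,1)`, `q* = -log (1-q)`,
`N⁽ᵈ⁾(t) = #{n ≥ 1 : ∑_{k<n} ζ k ≤ t}`.  For every `x > 0`, with
`V⁽ᵈ⁾ = x - q* N⁽ᵈ⁾(a₁ x/q*)`: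
`E V⁽ᵈ⁾ ≤ q* a₁⁽ᵈ⁾/a₁ + (1 - F⁽ᵈ⁾(a₁ x/q*)) x`. -/
theorem delayed_renewal_V_first_moment_bound
    {Ω : Type*} [MeasureSpace Ω] [IsProbabilityMeasure (ℙ : Measure Ω)]
    (ζ : ℕ → Ω → ℝ)
    (hmeas : ∀ k, Measurable (ζ k))
    (hindep : iIndepFun ζ ℙ)
    (hident : ∀ k, 1 ≤ k → IdentDistrib (ζ k) (ζ 1) ℙ ℙ)
    (hpos : ∀ k, ∀ᵐ ω ∂ℙ, 0 < ζ k ω)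
    (q : ℝ) (hq0 : 0 < q) (hq1 : q < 1)
    (qs : ℝ) (hqs : qs = -Real.log (1 - q))
    (a1 : ℝ) (ha1 : a1 = ∫ ω, ζ 1 ω ∂ℙ) (hζ1int : Integrable (ζ 1) ℙ)
    (a1d : ℝ) (ha1d : a1d = ∫ ω, ζ 0 ω ∂ℙ) (hζdint : Integrable (ζ 0) ℙ)
    (Nd : ℝ → Ω → ℕ)
    (hNd : ∀ t ω, Nd t ω =
      Set.ncard {n : ℕ | 1 ≤ n ∧ (∑ k ∈ Finset.range n, ζ k ω) ≤ t})
    (Fd : ℝ → ℝ) (hFd : ∀ y, Fd y = (ℙ {ω | ζ 0 ω ≤ y}).toReal)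
    (x : ℝ) (hx : 0 < x) :
    ∫ ω, (x - qs * (Nd (a1 * x / qs) ω : ℝ)) ∂ℙ ≤
      qs * a1d / a1 + (1 - Fd (a1 * x / qs)) * x := by
  have hqs0 : 0 < qs := by
    rw [hqs]
    have : Real.log (1 - q) < 0 := Real.log_neg (by linarith) (by linarith)
    linarith
  -- a1 > 0
  have hζ1nn : 0 ≤ᵐ[ℙ] ζ 1 := (hpos 1).mono fun ω h => h.le
  have hζ0nn : 0 ≤ᵐ[ℙ] ζ 0 := (hpos 0).mono fun ω h => h.le
  have ha1pos : 0 < a1 := by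
    rw [ha1]
    rw [integral_pos_iff_support_of_nonneg_ae hζ1nn hζ1int]
    rw [pos_iff_ne_zero]
    intro h0
    have h1 : ∀ᵐ ω ∂ℙ, ζ 1 ω = 0 := by
      have := measure_eq_zero_iff_ae_notMem.1 h0
      filter_upwards [this] with ω hω
      simpa [Function.mem_support, not_not] using hω
    obtain ⟨ω, h, h'⟩ := (h1.and (hpos 1)).exists
    linarith
  have ha1d0 : 0 ≤ a1d := ha1d ▸ integral_nonneg_of_ae hζ0nn
  set t : ℝ := a1 * x / qs with ht
  have ht0 : 0 < t := by positivity
  set S : ℕ → Ω → ℝ := fun k ω => ∑ j ∈ Finset.range (k + 1), ζ j ω with hSdef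
  have hSmeas : ∀ k, Measurable (S k) := fun k => Finset.measurable_sum _ fun j _ => hmeas j
  set A : ℕ → Set Ω := fun k => {ω | S k ω ≤ t} with hAdef
  have hAmeas : ∀ k, MeasurableSet (A k) := fun k => measurableSet_le (hSmeas k) measurable_const
  -- The event that the renewal set is infinite is null
  have hB : ℙ (⋂ n, A n) = 0 := by
    by_contra hB0
    set p := ℙ (⋂ n, A n) with hp
    have hpne : p ≠ ∞ := measure_ne_top _ _
    have hC : ∀ n : ℕ, MeasurableSet {ω | ζ 1 ω ≤ 1 / (n + 1 : ℝ)} :=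
      fun n => measurableSet_le (hmeas 1) measurable_const
    have hanti : Antitone fun n : ℕ => {ω | ζ 1 ω ≤ 1 / (n + 1 : ℝ)} := by
      intro n m hnm ω hω
      have : (1 : ℝ) / (m + 1) ≤ 1 / (n + 1) := by
        apply one_div_le_one_div_of_le <;> [positivity; exact_mod_cast (by omega : n + 1 ≤ m + 1)]
      exact le_trans hω this
    have hiInter : ℙ (⋂ n : ℕ, {ω | ζ 1 ω ≤ 1 / (n + 1 : ℝ)}) = 0 := by
      refine measure_mono_null ?_ (ae_iff.1 (hpos 1))
      intro ω hω
      simp only [Set.mem_iInter, Set.mem_setOf_eq] at hω ⊢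
      intro hpos'
      obtain ⟨n, hn⟩ := exists_nat_one_div_lt hpos'
      exact absurd (hω n) (by linarith)
    have htend : Filter.Tendsto (fun n : ℕ => ℙ {ω | ζ 1 ω ≤ 1 / (n + 1 : ℝ)})
        Filter.atTop (nhds 0) := by
      have := tendsto_measure_iInter_atTop (μ := ℙ)
        (fun n => (hC n).nullMeasurableSet) hanti ⟨0, measure_ne_top _ _⟩
      rwa [hiInter] at this
    have hp2 : (0 : ℝ≥0∞) < p / 2 := ENNReal.div_pos hB0 (by norm_num)
    obtain ⟨n₀, hn₀⟩ := (htend.eventually_lt_const hp2).exists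
    set δ : ℝ := 1 / (n₀ + 1 : ℝ) with hδ
    have hδ0 : 0 < δ := by positivity
    have hkey : ∀ k, 1 ≤ k → p / 2 ≤ ℙ ((⋂ n, A n) ∩ {ω | δ < ζ k ω}) := by
      intro k hk
      have hident' : ℙ {ω | ζ k ω ≤ δ} = ℙ {ω | ζ 1 ω ≤ δ} := by
        have := (hident k hk).measure_mem_eq (s := Set.Iic δ) measurableSet_Iic
        simpa [Set.preimage, Set.mem_Iic] using this
      have hsplit : (⋂ n, A n) ⊆ ((⋂ n, A n) ∩ {ω | δ < ζ k ω}) ∪ {ω | ζ k ω ≤ δ} := by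
        intro ω hω
        by_cases h : δ < ζ k ω
        · exact Or.inl ⟨hω, h⟩
        · exact Or.inr (not_lt.1 h)
      have hchain : p ≤ ℙ ((⋂ n, A n) ∩ {ω | δ < ζ k ω}) + p / 2 := by
        calc p ≤ ℙ (((⋂ n, A n) ∩ {ω | δ < ζ k ω}) ∪ {ω | ζ k ω ≤ δ}) := measure_mono hsplit
        _ ≤ ℙ ((⋂ n, A n) ∩ {ω | δ < ζ k ω}) + ℙ {ω | ζ k ω ≤ δ} := measure_union_le _ _
        _ ≤ ℙ ((⋂ n, A n) ∩ {ω | δ < ζ k ω}) + p / 2 := by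
            rw [hident']
            exact add_le_add le_rfl hn₀.le
      have := tsub_le_iff_right.2 hchain
      rwa [ENNReal.sub_half hpne] at this
    set c : ℝ≥0∞ := ENNReal.ofReal δ * (p / 2) with hc
    have hc0 : c ≠ 0 := by
      apply mul_ne_zero
      · exact (ENNReal.ofReal_pos.2 hδ0).ne'
      · exact hp2.ne'
    have hbound : ∀ n : ℕ, (n : ℝ≥0∞) * c ≤ ENNReal.ofReal t := by
      intro n
      have hstep : ∀ k ∈ Finset.range n,
          c ≤ ∫⁻ ω in (⋂ n, A n), ENNReal.ofReal (ζ (k + 1) ω) ∂ℙ := by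
        intro k _
        calc c ≤ ENNReal.ofReal δ * ℙ ((⋂ n, A n) ∩ {ω | δ < ζ (k + 1) ω}) :=
              mul_le_mul_right (hkey (k + 1) (by omega)) _
        _ = ∫⁻ _ in (⋂ n, A n) ∩ {ω | δ < ζ (k + 1) ω}, ENNReal.ofReal δ ∂ℙ := by
              rw [setLIntegral_const]
        _ ≤ ∫⁻ ω in (⋂ n, A n) ∩ {ω | δ < ζ (k + 1) ω}, ENNReal.ofReal (ζ (k + 1) ω) ∂ℙ := by
              apply setLIntegral_mono (ENNReal.measurable_ofReal.comp (hmeas (k + 1)))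
              intro ω hω
              exact ENNReal.ofReal_le_ofReal hω.2.le
        _ ≤ ∫⁻ ω in (⋂ n, A n), ENNReal.ofReal (ζ (k + 1) ω) ∂ℙ :=
              lintegral_mono_set Set.inter_subset_left
      calc (n : ℝ≥0∞) * c = ∑ _k ∈ Finset.range n, c := by
            simp [Finset.sum_const, nsmul_eq_mul]
      _ ≤ ∑ k ∈ Finset.range n, ∫⁻ ω in (⋂ n, A n), ENNReal.ofReal (ζ (k + 1) ω) ∂ℙ :=
            Finset.sum_le_sum hstep
      _ = ∫⁻ ω in (⋂ n, A n), ∑ k ∈ Finset.range n, ENNReal.ofReal (ζ (k + 1) ω) ∂ℙ :=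
            (lintegral_finset_sum _ fun k _ => ENNReal.measurable_ofReal.comp (hmeas (k + 1))).symm
      _ ≤ ENNReal.ofReal t := by
            have hmeasB : MeasurableSet (⋂ n, A n) := MeasurableSet.iInter fun n => hAmeas n
            have hae : ∀ᵐ ω ∂((ℙ : Measure Ω).restrict (⋂ n, A n)),
                ∑ k ∈ Finset.range n, ENNReal.ofReal (ζ (k + 1) ω) ≤ ENNReal.ofReal t := by
              filter_upwards [ae_restrict_of_ae (ae_all_iff.2 hpos),
                ae_restrict_mem hmeasB] with ω hω hωB
              have hsum : ∑ k ∈ Finset.range n, ENNReal.ofReal (ζ (k + 1) ω)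
                  = ENNReal.ofReal (∑ k ∈ Finset.range n, ζ (k + 1) ω) :=
                (ENNReal.ofReal_sum_of_nonneg fun k _ => (hω (k + 1)).le).symm
              rw [hsum]
              apply ENNReal.ofReal_le_ofReal
              have hωA : S n ω ≤ t := by
                have := Set.mem_iInter.1 hωB n
                exact this
              have : ∑ k ∈ Finset.range n, ζ (k + 1) ω + ζ 0 ω = S n ω := by
                rw [hSdef]; simp [Finset.sum_range_succ']
              linarith [hω 0, hωA]
            calc ∫⁻ ω in (⋂ n, A n), ∑ k ∈ Finset.range n, ENNReal.ofReal (ζ (k + 1) ω) ∂ℙ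
                ≤ ∫⁻ _ in (⋂ n, A n), ENNReal.ofReal t ∂ℙ := lintegral_mono_ae hae
            _ = ENNReal.ofReal t * p := by rw [setLIntegral_const]
            _ ≤ ENNReal.ofReal t * 1 := mul_le_mul_right prob_le_one _
            _ = ENNReal.ofReal t := mul_one _
    have hcfin : ENNReal.ofReal t / c ≠ ∞ :=
      (ENNReal.div_lt_top ENNReal.ofReal_ne_top hc0).ne
    obtain ⟨n, hn⟩ := ENNReal.exists_nat_gt hcfin
    have hlt : ENNReal.ofReal t < n * c :=
      (ENNReal.div_lt_iff (Or.inl hc0) (Or.inr ENNReal.ofReal_ne_top)).1 hn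
    exact absurd (hbound n) (not_le.2 hlt)
  -- structural description of the renewal count, a.e.
  have hstruct : ∀ᵐ ω ∂ℙ, (∀ k, ω ∈ A k ↔ k < Nd t ω) ∧ t < S (Nd t ω) ω := by
    filter_upwards [ae_all_iff.2 hpos, compl_mem_ae_iff.2 hB] with ω hp hωB
    have hSmono : ∀ j k : ℕ, j ≤ k → S j ω ≤ S k ω := by
      intro j k hjk
      apply Finset.sum_le_sum_of_subset_of_nonneg (Finset.range_subset_range.2 (by omega))
      exact fun i _ _ => (hp i).le
    obtain ⟨n, hn⟩ : ∃ n, t < S n ω := by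
      simp only [Set.mem_compl_iff, Set.mem_iInter, not_forall] at hωB
      obtain ⟨n, hn⟩ := hωB
      exact ⟨n, lt_of_not_ge hn⟩
    set M : Set ℕ := {m : ℕ | 1 ≤ m ∧ (∑ k ∈ Finset.range m, ζ k ω) ≤ t} with hM
    have hMS : ∀ m : ℕ, 1 ≤ m → ((∑ k ∈ Finset.range m, ζ k ω) = S (m - 1) ω) := by
      intro m hm
      have h : m - 1 + 1 = m := by omega
      simp only [hSdef]
      rw [h]
    have hfin : M.Finite := by
      apply Set.Finite.subset (Set.finite_Iio (n + 2))
      intro m hm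
      obtain ⟨hm1, hm2⟩ := hm
      simp only [Set.mem_Iio]
      by_contra hge
      have : S n ω ≤ S (m - 1) ω := hSmono n (m - 1) (by omega)
      rw [← hMS m hm1] at this
      linarith
    have hsub : ∀ m ∈ M, 1 ≤ m := fun m hm => hm.1
    have hdc : ∀ k m, 1 ≤ k → k ≤ m → m ∈ M → k ∈ M := by
      intro k m hk hkm hm
      obtain ⟨hm1, hm2⟩ := hm
      rw [hMS m hm1] at hm2
      refine ⟨hk, ?_⟩
      rw [hMS k hk]
      exact le_trans (hSmono (k - 1) (m - 1) (by omega)) hm2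
    have hiff := aux_icc_of_downward M hfin hsub hdc
    have hNdM : Nd t ω = M.ncard := hNd t ω
    constructor
    · intro k
      have : ω ∈ A k ↔ (k + 1) ∈ M := by
        constructor
        · intro hω; exact ⟨by omega, by have h' : S k ω ≤ t := hω; rw [hMS (k + 1) (by omega)]; simpa using h'⟩
        · intro hm
          have := hm.2
          rw [hMS (k + 1) (by omega)] at this
          show S k ω ≤ t
          simpa using this
      rw [this, hiff (k + 1), hNdM]
      omega
    · have hnot : (Nd t ω + 1) ∉ M := by
        rw [hiff, hNdM]
        omega
      rw [hM, Set.mem_setOf_eq, not_and] at hnot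
      have := hnot (by omega)
      rw [hMS (Nd t ω + 1) (by omega)] at this
      simpa using lt_of_not_ge this
  -- the ENNReal-valued comparison functions
  set g : Ω → ℝ≥0∞ := fun ω =>
    ∑' k, (A k).indicator (fun ω' => ENNReal.ofReal (ζ (k + 1) ω')) ω with hgdef
  set NN : Ω → ℝ≥0∞ := fun ω => ∑' k, (A k).indicator (fun _ => (1 : ℝ≥0∞)) ω with hNNdef
  have hgmeas : Measurable g :=
    Measurable.ennreal_tsum fun k =>
      (ENNReal.measurable_ofReal.comp (hmeas (k + 1))).indicator (hAmeas k)
  have h1 : ∀ᵐ ω ∂ℙ, ENNReal.ofReal t ≤ ENNReal.ofReal (ζ 0 ω) + g ω := by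
    filter_upwards [hstruct, ae_all_iff.2 hpos] with ω hωs hp
    obtain ⟨hiff, hlt⟩ := hωs
    have hg : g ω = ∑ k ∈ Finset.range (Nd t ω), ENNReal.ofReal (ζ (k + 1) ω) := by
      simp only [hgdef]
      rw [tsum_eq_sum (s := Finset.range (Nd t ω))
        (fun k hk => Set.indicator_of_notMem
          (fun hmem => hk (Finset.mem_range.2 ((hiff k).1 hmem))) _)]
      exact Finset.sum_congr rfl fun k hk =>
        Set.indicator_of_mem ((hiff k).2 (Finset.mem_range.1 hk)) _
    rw [hg, ← ENNReal.ofReal_sum_of_nonneg (fun i _ => (hp (i + 1)).le),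
      ← ENNReal.ofReal_add (hp 0).le (Finset.sum_nonneg fun i _ => (hp (i + 1)).le)]
    apply ENNReal.ofReal_le_ofReal
    have hsum : ζ 0 ω + ∑ k ∈ Finset.range (Nd t ω), ζ (k + 1) ω = S (Nd t ω) ω := by
      rw [hSdef]; simp [Finset.sum_range_succ']; ring
    linarith
  have hNN : ∀ᵐ ω ∂ℙ, ENNReal.ofReal ((Nd t ω : ℝ)) = NN ω := by
    filter_upwards [hstruct] with ω hωs
    obtain ⟨hiff, _⟩ := hωs
    have : NN ω = ∑ k ∈ Finset.range (Nd t ω), (1 : ℝ≥0∞) := by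
      simp only [hNNdef]
      rw [tsum_eq_sum (s := Finset.range (Nd t ω))
        (fun k hk => Set.indicator_of_notMem
          (fun hmem => hk (Finset.mem_range.2 ((hiff k).1 hmem))) _)]
      exact Finset.sum_congr rfl fun k hk =>
        Set.indicator_of_mem ((hiff k).2 (Finset.mem_range.1 hk)) _
    rw [this]
    simp [ENNReal.ofReal_natCast]
  have hζklint : ∀ k, 1 ≤ k → ∫⁻ ω, ENNReal.ofReal (ζ k ω) ∂ℙ = ENNReal.ofReal a1 := by
    intro k hk
    have hid := (hident k hk).comp ENNReal.measurable_ofReal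
    have h := hid.lintegral_eq
    simp only [Function.comp] at h
    rw [h, ha1, ofReal_integral_eq_lintegral_ofReal hζ1int hζ1nn]
  have hζ0lint : ∫⁻ ω, ENNReal.ofReal (ζ 0 ω) ∂ℙ = ENNReal.ofReal a1d := by
    rw [ha1d, ofReal_integral_eq_lintegral_ofReal hζdint hζ0nn]
  have hglint : ∫⁻ ω, g ω ∂ℙ = ENNReal.ofReal a1 * ∑' k, ℙ (A k) := by
    simp only [hgdef]
    rw [lintegral_tsum (fun k =>
      (((hmeas (k + 1)).ennreal_ofReal).indicator (hAmeas k)).aemeasurable)]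
    have hterm : ∀ k : ℕ,
        ∫⁻ ω, (A k).indicator (fun ω' => ENNReal.ofReal (ζ (k + 1) ω')) ω ∂ℙ
          = ENNReal.ofReal a1 * ℙ (A k) := by
      intro k
      have hrw : (fun ω => (A k).indicator (fun ω' => ENNReal.ofReal (ζ (k + 1) ω')) ω)
          = ((fun y => ENNReal.ofReal y) ∘ ζ (k + 1)) *
            ((Set.Iic t).indicator (fun _ => (1 : ℝ≥0∞)) ∘ S k) := by
        funext ω
        by_cases hω : ω ∈ A k
        · have : S k ω ∈ Set.Iic t := hω
          simp [Set.indicator_of_mem hω, Function.comp, Set.indicator_of_mem this]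
        · have : S k ω ∉ Set.Iic t := hω
          simp [Set.indicator_of_notMem hω, Function.comp, Set.indicator_of_notMem this]
      have hindepk : IndepFun (ζ (k + 1)) (S k) ℙ := by
        have := hindep.indepFun_finsetSum_of_notMem hmeas
          (s := Finset.range (k + 1)) (i := k + 1) (by simp)
        have heq : (∑ j ∈ Finset.range (k + 1), ζ j) = S k := by
          funext ω; rw [hSdef]; simp [Finset.sum_apply]
        rw [heq] at this
        exact this.symm
      have himeas : Measurable ((Set.Iic t).indicator (fun _ => (1 : ℝ≥0∞))) :=
        measurable_const.indicator measurableSet_Iic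
      have hprod := lintegral_mul_eq_lintegral_mul_lintegral_of_indepFun (μ := ℙ)
        (f := (fun y => ENNReal.ofReal y) ∘ ζ (k + 1))
        (g := (Set.Iic t).indicator (fun _ => (1 : ℝ≥0∞)) ∘ S k)
        (ENNReal.measurable_ofReal.comp (hmeas (k + 1)))
        (himeas.comp (hSmeas k))
        (hindepk.comp ENNReal.measurable_ofReal himeas)
      rw [hrw, hprod]
      congr 1
      · exact hζklint (k + 1) (by omega)
      · have : ((Set.Iic t).indicator (fun _ => (1 : ℝ≥0∞)) ∘ S k)
            = (A k).indicator (fun _ => (1 : ℝ≥0∞)) := by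
          funext ω
          by_cases hω : ω ∈ A k
          · have : S k ω ∈ Set.Iic t := hω
            simp [Set.indicator_of_mem hω, Function.comp, Set.indicator_of_mem this]
          · have : S k ω ∉ Set.Iic t := hω
            simp [Set.indicator_of_notMem hω, Function.comp, Set.indicator_of_notMem this]
        rw [this]
        exact lintegral_indicator_one (hAmeas k)
    simp_rw [hterm]
    rw [ENNReal.tsum_mul_left]
  have hNNlint : ∫⁻ ω, NN ω ∂ℙ = ∑' k, ℙ (A k) := by
    simp only [hNNdef]
    rw [lintegral_tsum (fun k =>
      ((measurable_const (a := (1:ℝ≥0∞))).indicator (hAmeas k)).aemeasurable)]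
    exact tsum_congr fun k => lintegral_indicator_one (hAmeas k)
  have hmain : ENNReal.ofReal t ≤ ENNReal.ofReal a1d +
      ENNReal.ofReal a1 * ∫⁻ ω, ENNReal.ofReal ((Nd t ω : ℝ)) ∂ℙ := by
    have hNint' : ∫⁻ ω, ENNReal.ofReal ((Nd t ω : ℝ)) ∂ℙ = ∫⁻ ω, NN ω ∂ℙ :=
      lintegral_congr_ae hNN
    calc ENNReal.ofReal t = ∫⁻ _, ENNReal.ofReal t ∂ℙ := by simp
    _ ≤ ∫⁻ ω, (ENNReal.ofReal (ζ 0 ω) + g ω) ∂ℙ := lintegral_mono_ae h1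
    _ = ENNReal.ofReal a1d + ENNReal.ofReal a1 * ∑' k, ℙ (A k) := by
        rw [lintegral_add_left ((hmeas 0).ennreal_ofReal), hζ0lint, hglint]
    _ = ENNReal.ofReal a1d + ENNReal.ofReal a1 * ∫⁻ ω, ENNReal.ofReal ((Nd t ω : ℝ)) ∂ℙ := by
        rw [hNint', hNNlint]
  have hFd1 : Fd t ≤ 1 := by
    rw [hFd]
    have := prob_le_one (μ := ℙ) (s := {ω | ζ 0 ω ≤ t})
    calc (ℙ {ω | ζ 0 ω ≤ t}).toReal ≤ (1 : ℝ≥0∞).toReal :=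
      ENNReal.toReal_mono ENNReal.one_ne_top this
    _ = 1 := by simp
  have hFdx : 0 ≤ (1 - Fd t) * x := mul_nonneg (by linarith) hx.le
  by_cases hint : Integrable (fun ω => x - qs * (Nd t ω : ℝ)) ℙ
  · have hNint : Integrable (fun ω => (Nd t ω : ℝ)) ℙ := by
      have h2 : Integrable (fun ω => qs * (Nd t ω : ℝ)) ℙ := by
        have h := (integrable_const (μ := ℙ) x).sub hint
        have heq : ((fun _ => x) - fun ω => x - qs * (Nd t ω : ℝ))
            = fun ω => qs * (Nd t ω : ℝ) := by
          funext ω; simp [Pi.sub_apply]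
        rwa [heq] at h
      have h4 := h2.const_mul qs⁻¹
      have h5 : (fun ω => qs⁻¹ * (qs * (Nd t ω : ℝ))) = fun ω => (Nd t ω : ℝ) := by
        funext ω; field_simp
      rwa [h5] at h4
    set I : ℝ := ∫ ω, (Nd t ω : ℝ) ∂ℙ with hI
    have hI0 : 0 ≤ I := integral_nonneg fun ω => Nat.cast_nonneg _
    have hInn : ∫⁻ ω, ENNReal.ofReal ((Nd t ω : ℝ)) ∂ℙ = ENNReal.ofReal I :=
      (ofReal_integral_eq_lintegral_ofReal hNint
        (Filter.Eventually.of_forall fun ω => Nat.cast_nonneg _)).symm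
    have hreal : t ≤ a1d + a1 * I := by
      have h6 := hmain
      rw [hInn, ← ENNReal.ofReal_mul ha1pos.le,
        ← ENNReal.ofReal_add ha1d0 (mul_nonneg ha1pos.le hI0)] at h6
      exact (ENNReal.ofReal_le_ofReal_iff (by positivity)).1 h6
    have hLHS : ∫ ω, (x - qs * (Nd t ω : ℝ)) ∂ℙ = x - qs * I := by
      rw [integral_sub (integrable_const x) (hNint.const_mul qs)]
      rw [integral_const, integral_const_mul]
      simp [hI]
    rw [hLHS]
    have hu : qs * a1d / a1 * a1 = qs * a1d := div_mul_cancel₀ _ (ne_of_gt ha1pos)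
    have h7 : t * qs = a1 * x := by rw [ht]; field_simp
    nlinarith [mul_le_mul_of_nonneg_left hreal hqs0.le, ha1pos, hI0, hqs0]
  · rw [integral_undef hint]
    have : 0 ≤ qs * a1d / a1 := by positivity
    linarith
end
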